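/- If u₀* ∈ H is the minimizer of J and ψ = ℒ*(ℒu₀* − u_T), then u₀* vanishes μ-almost everywhere on the set {x ∈ X : |ψ(x)| ≤ β}; that is, for μ-a.e. x, |ψ(x)| ≤ β implies u₀*(x) = 0. -/

import Mathlib

open MeasureTheory

open scoped RealInnerProductSpace

/-- The cost functional `J(u₀) = ½‖ℒu₀ − u_T‖² + (τ/2)‖u₀‖² + β∫|u₀| dμ` on `H = L²(μ; ℝ)`. -/
noncomputable def J {X : Type*} [MeasurableSpace X] (μ : Measure X)
    (L : Lp ℝ 2 μ →L[ℝ] Lp ℝ 2 μ) (uT : Lp ℝ 2 μ) (τ β : ℝ) (u₀ : Lp ℝ 2 μ) : ℝ :=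
  (1 / 2) * ‖L u₀ - uT‖ ^ 2 + (τ / 2) * ‖u₀‖ ^ 2 + β * ∫ x, |u₀ x| ∂μ

/-- Structural property: with `ψ = ℒ*(ℒu₀* − u_T)`, for a.e. `x`,
`|ψ(x)| ≤ β` implies `u₀*(x) = 0`. -/
theorem minimizer_vanishes_where_adjoint_small {X : Type*} [MeasurableSpace X] (μ : Measure X)
    [IsFiniteMeasure μ] (L : Lp ℝ 2 μ →L[ℝ] Lp ℝ 2 μ) (uT : Lp ℝ 2 μ)
    (τ β : ℝ) (hτ : 0 < τ) (hβ : 0 < β) (u₀star : Lp ℝ 2 μ)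
    (hmin : ∀ u₀ : Lp ℝ 2 μ, J μ L uT τ β u₀star ≤ J μ L uT τ β u₀)
    (ψ : Lp ℝ 2 μ) (hψ : ψ = L.adjoint (L u₀star - uT)) :
    ∀ᵐ x ∂μ, |ψ x| ≤ β → u₀star x = 0 := by
  classical
  -- the set where `|ψ| ≤ β`
  set S : Set X := {x | |ψ x| ≤ β} with hSdef
  have hSm : MeasurableSet S :=
    measurableSet_le ((Lp.stronglyMeasurable ψ).measurable.abs) measurable_const
  -- the truncated direction `w = u₀* · 1_S`
  set w : X → ℝ := S.indicator (⇑u₀star) with hwdef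
  have hwmem : MemLp w 2 μ := (Lp.memLp u₀star).indicator hSm
  set W : Lp ℝ 2 μ := hwmem.toLp w with hWdef
  have hW : ⇑W =ᵐ[μ] w := hwmem.coeFn_toLp
  have hu0int : Integrable (⇑u₀star) μ := (Lp.memLp u₀star).integrable one_le_two
  have hwint : Integrable w μ := hwmem.integrable one_le_two
  -- inner products in L² are integrals of products
  have hinner : ∀ f g : Lp ℝ 2 μ, ⟪f, g⟫ = ∫ x, f x * g x ∂μ := by
    intro f g
    rw [L2.inner_def]
    congr 1
    funext x
    simp [mul_comm]
  -- adjoint relation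
  have hψadj : ⟪ψ, W⟫ = ⟪L u₀star - uT, L W⟫ := by
    rw [hψ, ContinuousLinearMap.adjoint_inner_left]
  -- `⟪u₀*, W⟫ = ‖W‖²`
  have hWu : ⟪u₀star, W⟫ = ‖W‖ ^ 2 := by
    rw [← real_inner_self_eq_norm_sq, hinner, hinner]
    refine integral_congr_ae ?_
    filter_upwards [hW] with x hx
    rw [hx]
    by_cases hxS : x ∈ S
    · simp [hwdef, Set.indicator_of_mem hxS]
    · simp [hwdef, Set.indicator_of_notMem hxS]
  -- `⟪ψ, W⟫ + β ∫ |w| ≥ 0` since `|ψ| ≤ β` on `S`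
  have h1 : Integrable (fun x => ψ x * W x) μ := by
    have := L2.integrable_inner (𝕜 := ℝ) ψ W
    simpa [mul_comm] using this
  have h2 : Integrable (fun x => ψ x * w x) μ := by
    refine h1.congr ?_
    filter_upwards [hW] with x hx
    rw [hx]
  have hψWbound : 0 ≤ ⟪ψ, W⟫ + β * ∫ x, |w x| ∂μ := by
    rw [hinner]
    have hcongr : ∫ x, ψ x * W x ∂μ = ∫ x, ψ x * w x ∂μ := by
      refine integral_congr_ae ?_
      filter_upwards [hW] with x hx
      rw [hx]
    have key : 0 ≤ ∫ x, (ψ x * w x + β * |w x|) ∂μ := by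
      refine integral_nonneg fun x => ?_
      show (0:ℝ) ≤ _
      by_cases hxS : x ∈ S
      · have hb : |ψ x| ≤ β := hxS
        have h3 : -(|ψ x| * |w x|) ≤ ψ x * w x := by
          have := neg_abs_le (ψ x * w x)
          rwa [abs_mul] at this
        have h4 : |ψ x| * |w x| ≤ β * |w x| :=
          mul_le_mul_of_nonneg_right hb (abs_nonneg _)
        linarith
      · simp [hwdef, Set.indicator_of_notMem hxS]
    rw [integral_add h2 ((hwint.abs).const_mul β), integral_const_mul] at key
    linarith [key, hcongr.ge, hcongr.le]
  -- abbreviations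
  set C : ℝ := (1 / 2) * ‖L W‖ ^ 2 + (τ / 2) * ‖W‖ ^ 2 with hCdef
  set D : ℝ := ⟪ψ, W⟫ + τ * ‖W‖ ^ 2 + β * ∫ x, |w x| ∂μ with hDdef
  have hCnonneg : 0 ≤ C := by positivity
  -- first-order optimality: `D ≤ t C` for all small `t > 0`
  have hkey : ∀ t : ℝ, 0 < t → t ≤ 1 → D ≤ t * C := by
    intro t ht0 ht1
    -- the integral term
    have hco : ∀ᵐ x ∂μ, (u₀star - t • W) x = u₀star x - t * w x := by
      filter_upwards [Lp.coeFn_sub u₀star (t • W), Lp.coeFn_smul t W, hW] with x e1 e2 e3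
      rw [e1, Pi.sub_apply, e2, Pi.smul_apply, e3, smul_eq_mul]
    have hint : ∫ x, |(u₀star - t • W) x| ∂μ
        = ∫ x, |u₀star x| ∂μ - t * ∫ x, |w x| ∂μ := by
      have hc2 : ∫ x, |(u₀star - t • W) x| ∂μ = ∫ x, (|u₀star x| - t * |w x|) ∂μ := by
        refine integral_congr_ae ?_
        filter_upwards [hco] with x hx
        rw [hx]
        by_cases hxS : x ∈ S
        · simp only [hwdef, Set.indicator_of_mem hxS]
          rw [show u₀star x - t * u₀star x = (1 - t) * u₀star x by ring, abs_mul,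
            abs_of_nonneg (by linarith : (0:ℝ) ≤ 1 - t)]
          ring
        · simp [hwdef, Set.indicator_of_notMem hxS]
      rw [hc2, integral_sub hu0int.abs ((hwint.abs).const_mul t), integral_const_mul]
    -- expansion of J
    have e1 : L (u₀star - t • W) - uT = (L u₀star - uT) - t • (L W) := by
      rw [map_sub, L.map_smul]; abel
    have hJexp : J μ L uT τ β (u₀star - t • W)
        = J μ L uT τ β u₀star - t * D + t ^ 2 * C := by
      unfold J
      rw [e1, hint, norm_sub_sq_real, real_inner_smul_right, norm_smul,
        norm_sub_sq_real u₀star (t • W), real_inner_smul_right, norm_smul, hWu, ← hψadj,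
        hDdef, hCdef]
      simp only [Real.norm_eq_abs, mul_pow, sq_abs]
      ring
    have hm := hmin (u₀star - t • W)
    rw [hJexp] at hm
    have h3 : t * D ≤ t * (t * C) := by nlinarith
    exact (mul_le_mul_iff_right₀ ht0).mp h3
  -- hence `D ≤ 0`
  have hD : D ≤ 0 := by
    refine le_of_forall_pos_le_add fun ε hε => ?_
    have hC1 : (0:ℝ) < C + 1 := by linarith
    have htpos : 0 < min 1 (ε / (C + 1)) := lt_min one_pos (div_pos hε hC1)
    have hkt := hkey _ htpos (min_le_left _ _)
    have hbound : min 1 (ε / (C + 1)) * C ≤ ε := by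
      calc min 1 (ε / (C + 1)) * C ≤ (ε / (C + 1)) * C :=
            mul_le_mul_of_nonneg_right (min_le_right _ _) hCnonneg
        _ ≤ ε := by
            rw [div_mul_eq_mul_div, div_le_iff₀ hC1]
            nlinarith
    linarith
  -- conclude `W = 0`
  have hWnorm : ‖W‖ ^ 2 ≤ 0 := by
    have h5 : τ * ‖W‖ ^ 2 ≤ 0 := by
      rw [hDdef] at hD
      linarith
    exact le_of_not_gt fun hp => absurd h5 (not_le.mpr (mul_pos hτ hp))
  have hW0 : W = 0 := by
    have h0 : ‖W‖ = 0 := pow_eq_zero_iff two_ne_zero |>.mp (le_antisymm hWnorm (sq_nonneg _))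
    exact norm_eq_zero.mp h0
  have hw0 : w =ᵐ[μ] 0 := by
    refine hW.symm.trans ?_
    rw [hW0]
    exact Lp.coeFn_zero ℝ 2 μ
  filter_upwards [hw0] with x hx hxb
  have hxS : x ∈ S := hxb
  simpa [hwdef, Set.indicator_of_mem hxS] using hx
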